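/- Let (eₙ) be a Schauder basis of a Banach space X and suppose that for each L ∈ ℕ there is a constant c(L) such that any two normalized block sequences of (eₙ) differing in at most L terms are c(L)-equivalent. If for every block sequence (yₙ), every K ∈ ℕ and every m ∈ ℕ there exists l > m with span{yₙ : m ≤ n ≤ l} not K-embeddable into the closed span of {eₙ : n ≥ l}, then for every block sequence (yₙ) there exists an increasing sequence of successive intervals (Iⱼ) of ℕ such that for all K, span{yₙ : n ∈ I_K} does not K-embed into the closed span of {eₙ : n ∉ I_K}, and consequently for every infinite A ⊆ ℕ, the closed span of (yₙ) does not embed into the closed span of {eₙ : n ∉ ∪_{j∈A} Iⱼ}. -/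

import Mathlib

def IsBasicSeq {E : Type*} [NormedAddCommGroup E] [NormedSpace ℝ E] (e : ℕ → E) : Prop :=
  (∀ n, e n ≠ 0) ∧ ∃ C : ℝ, 0 < C ∧ ∀ (a : ℕ → ℝ) (n m : ℕ), n ≤ m →
    ‖∑ i ∈ Finset.range n, a i • e i‖ ≤ C * ‖∑ i ∈ Finset.range m, a i • e i‖

/-- A normalized block sequence of the basis `e`. -/
def IsBlockSeq {X : Type*} [NormedAddCommGroup X] [NormedSpace ℝ X] (e y : ℕ → X) : Prop :=
  ∃ p : ℕ → ℕ, StrictMono p ∧ ∀ n, ‖y n‖ = 1 ∧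
    y n ∈ Submodule.span ℝ (e '' Set.Ico (p n) (p (n + 1)))

/-- `Z` `K`-embeds into `W`. -/
def Embeds (K : ℝ) (Z W : Type*) [NormedAddCommGroup Z] [NormedSpace ℝ Z]
    [NormedAddCommGroup W] [NormedSpace ℝ W] : Prop :=
  ∃ T : Z →L[ℝ] W, ∀ z : Z, ‖z‖ ≤ ‖T z‖ ∧ ‖T z‖ ≤ K * ‖z‖



section Auxiliary

variable {X : Type*} [NormedAddCommGroup X] [NormedSpace ℝ X]

lemma IsBasicSeq.linearIndependent {e : ℕ → X} (he : IsBasicSeq e) :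
    LinearIndependent ℝ e := by
  classical
  obtain ⟨hne, C, hC, hbd⟩ := he
  rw [linearIndependent_iff']
  intro s g hsum i hi
  set g' : ℕ → ℝ := fun k => if k ∈ s then g k else 0 with hg'
  set N : ℕ := s.sup id + 1 with hN
  have hsub : s ⊆ Finset.range N := fun k hk =>
    Finset.mem_range.2 (Nat.lt_succ_of_le (Finset.le_sup (f := id) hk))
  have hNsum : ∑ k ∈ Finset.range N, g' k • e k = 0 := by
    rw [← Finset.sum_subset hsub (fun x _ hx => by simp [hg', if_neg hx]), ← hsum]
    exact Finset.sum_congr rfl fun x hx => by simp [hg', if_pos hx]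
  have hpart : ∀ m, m ≤ N → ∑ k ∈ Finset.range m, g' k • e k = 0 := by
    intro m hm
    have h := hbd g' m N hm
    rw [hNsum, norm_zero, mul_zero] at h
    exact norm_eq_zero.1 (le_antisymm h (norm_nonneg _))
  have hzero : ∀ k, k < N → g' k = 0 := by
    intro k hk
    have h1 := hpart (k + 1) hk
    have h2 := hpart k hk.le
    rw [Finset.sum_range_succ, h2, zero_add] at h1
    rcases smul_eq_zero.1 h1 with h | h
    · exact h
    · exact absurd h (hne k)
  have := hzero i (Finset.mem_range.1 (hsub hi))
  simpa only [g', if_pos hi] using this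

noncomputable def inclCLM {S T : Submodule ℝ X} (h : S ≤ T) : ↥S →L[ℝ] ↥T :=
  LinearMap.mkContinuous (Submodule.inclusion h) 1 (fun x => by rw [one_mul]; exact le_of_eq rfl)

@[simp] lemma inclCLM_coe {S T : Submodule ℝ X} (h : S ≤ T) (x : ↥S) :
    ((inclCLM h x : ↥T) : X) = (x : X) := rfl

lemma transfer [CompleteSpace X]
    (u z : ℕ → X) (hu : LinearIndependent ℝ u) (c : ℝ) (hc : 1 ≤ c)
    (h1 : ∀ (n : ℕ) (a : ℕ → ℝ),
      ‖∑ k ∈ Finset.range n, a k • z k‖ ≤ c * ‖∑ k ∈ Finset.range n, a k • u k‖)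
    (h2 : ∀ (n : ℕ) (a : ℕ → ℝ),
      ‖∑ k ∈ Finset.range n, a k • u k‖ ≤ c * ‖∑ k ∈ Finset.range n, a k • z k‖)
    (U V : Submodule ℝ X) (hU : Submodule.span ℝ (Set.range u) = U)
    (hz : ∀ n, z n ∈ V) :
    ∃ S : ↥U.topologicalClosure →L[ℝ] ↥V.topologicalClosure,
      ∀ w, c⁻¹ * ‖w‖ ≤ ‖S w‖ ∧ ‖S w‖ ≤ c * ‖w‖ := by
  classical
  subst hU
  have hc0 : (0:ℝ) < c := lt_of_lt_of_le one_pos hc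
  set U := Submodule.span ℝ (Set.range u) with hUdef
  let b : Module.Basis ℕ ℝ ↥U := Module.Basis.span hu
  let L0 : ↥U →ₗ[ℝ] X := b.constr ℝ z
  -- representation
  have hrep : ∀ x : ↥U, ∃ (n : ℕ) (a : ℕ → ℝ),
      (x : X) = ∑ k ∈ Finset.range n, a k • u k ∧ L0 x = ∑ k ∈ Finset.range n, a k • z k := by
    intro x
    set f := b.repr x with hf
    set n := f.support.sup id + 1 with hn
    have hsupp : f.support ⊆ Finset.range n := fun k hk =>
      Finset.mem_range.2 (Nat.lt_succ_of_le (Finset.le_sup (f := id) hk))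
    refine ⟨n, f, ?_, ?_⟩
    · have hx : (x : X) = ∑ k ∈ f.support, f k • u k := by
        conv_lhs => rw [← b.linearCombination_repr x]
        rw [Finsupp.linearCombination_apply, Finsupp.sum]
        rw [Submodule.coe_sum]
        exact Finset.sum_congr rfl fun k _ => by
          rw [SetLike.val_smul, Module.Basis.span_apply]
      rw [hx]
      exact Finset.sum_subset hsupp fun k _ hk => by
        rw [Finsupp.notMem_support_iff.1 hk, zero_smul]
    · have hLx : L0 x = ∑ k ∈ f.support, f k • z k := by
        rw [show L0 x = (b.constr ℝ z) x from rfl, Module.Basis.constr_apply, Finsupp.sum]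
      rw [hLx]
      exact Finset.sum_subset hsupp fun k _ hk => by
        rw [Finsupp.notMem_support_iff.1 hk, zero_smul]
  have hub : ∀ x : ↥U, ‖L0 x‖ ≤ c * ‖x‖ := by
    intro x
    obtain ⟨n, a, hx, hL⟩ := hrep x
    rw [hL, show ‖x‖ = ‖(x : X)‖ from rfl, hx]
    exact h1 n a
  have hlb : ∀ x : ↥U, ‖(x : X)‖ ≤ c * ‖L0 x‖ := by
    intro x
    obtain ⟨n, a, hx, hL⟩ := hrep x
    rw [hL, hx]
    exact h2 n a
  have hmem : ∀ x : ↥U, L0 x ∈ V.topologicalClosure := by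
    intro x
    obtain ⟨n, a, _, hL⟩ := hrep x
    rw [hL]
    exact Submodule.le_topologicalClosure V
      (Submodule.sum_mem _ fun k _ => Submodule.smul_mem _ _ (hz k))
  let L : ↥U →ₗ[ℝ] ↥V.topologicalClosure := L0.codRestrict _ hmem
  let Lc : ↥U →L[ℝ] ↥V.topologicalClosure := LinearMap.mkContinuous L c (fun x => hub x)
  let j : ↥U →L[ℝ] ↥U.topologicalClosure := inclCLM (Submodule.le_topologicalClosure U)
  have hdense : DenseRange ⇑j := by
    intro x
    rw [closure_subtype]
    have himg : (Subtype.val '' Set.range ⇑j) = (U : Set X) := by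
      ext v
      constructor
      · rintro ⟨w, ⟨p, rfl⟩, rfl⟩
        exact p.2
      · intro hv
        exact ⟨⟨v, Submodule.le_topologicalClosure U hv⟩, ⟨⟨v, hv⟩, rfl⟩, rfl⟩
    rw [himg, ← Submodule.topologicalClosure_coe]
    exact x.2
  have hiso : Isometry ⇑j := AddMonoidHomClass.isometry_of_norm _ (fun x => rfl)
  have huni : IsUniformInducing ⇑j := hiso.isUniformInducing
  let S : ↥U.topologicalClosure →L[ℝ] ↥V.topologicalClosure := Lc.extend j
  have heq : ∀ x : ↥U, S (j x) = Lc x := fun x => Lc.extend_eq (e := j) hdense huni x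
  refine ⟨S, ?_⟩
  have hclosed : IsClosed {w : ↥U.topologicalClosure | c⁻¹ * ‖w‖ ≤ ‖S w‖ ∧ ‖S w‖ ≤ c * ‖w‖} := by
    have : {w : ↥U.topologicalClosure | c⁻¹ * ‖w‖ ≤ ‖S w‖ ∧ ‖S w‖ ≤ c * ‖w‖} =
        {w | c⁻¹ * ‖w‖ ≤ ‖S w‖} ∩ {w | ‖S w‖ ≤ c * ‖w‖} := rfl
    rw [this]
    exact (isClosed_le (continuous_const.mul continuous_norm) S.continuous.norm).inter
      (isClosed_le S.continuous.norm (continuous_const.mul continuous_norm))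
  intro w
  refine hdense.induction_on w hclosed ?_
  intro x
  have hn : ‖j x‖ = ‖x‖ := rfl
  rw [heq x, hn]
  constructor
  · rw [inv_mul_le_iff₀ hc0]
    exact hlb x
  · exact hub x

lemma key_step [CompleteSpace X]
    (e : ℕ → X) (hne : ∀ n, e n ≠ 0) (hli : LinearIndependent ℝ e)
    (y : ℕ → X)
    (a l₀ : ℕ) (hal : a < l₀)
    (c : ℝ) (hc1 : 1 ≤ c)
    (hciso : ∀ u z : ℕ → X, IsBlockSeq e u → IsBlockSeq e z →
      (∃ S : Finset ℕ, S.card ≤ a ∧ ∀ n ∉ S, u n = z n) →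
      ∀ (n : ℕ) (b : ℕ → ℝ),
        c⁻¹ * ‖∑ k ∈ Finset.range n, b k • z k‖ ≤ ‖∑ k ∈ Finset.range n, b k • u k‖ ∧
        ‖∑ k ∈ Finset.range n, b k • u k‖ ≤ c * ‖∑ k ∈ Finset.range n, b k • z k‖)
    (K K'' : ℕ) (hK'' : c ^ 2 * K ≤ K'')
    (hneg : ¬ Embeds (K'' : ℝ) ↥(Submodule.span ℝ (y '' Set.Icc a l₀))
        ↥((Submodule.span ℝ (e '' {n | l₀ ≤ n})).topologicalClosure)) :
    ¬ Embeds (K : ℝ) ↥(Submodule.span ℝ (y '' Set.Icc a (l₀ + a)))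
        ↥((Submodule.span ℝ (e '' {n | n ∉ Set.Icc a (l₀ + a)})).topologicalClosure) := by
  classical
  rintro ⟨T, hT⟩
  apply hneg
  have hc0 : (0:ℝ) < c := lt_of_lt_of_le one_pos hc1
  set en : ℕ → X := fun n => ‖e n‖⁻¹ • e n with hendef
  have hnorm_ne : ∀ n, ‖e n‖ ≠ 0 := fun n => norm_ne_zero_iff.2 (hne n)
  have hennorm : ∀ n, ‖en n‖ = 1 := fun n => by
    rw [hendef]
    simp only [norm_smul, norm_inv, norm_norm]
    exact inv_mul_cancel₀ (hnorm_ne n)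
  have henli : LinearIndependent ℝ en := by
    have h := hli.units_smul (fun n => Units.mk0 (‖e n‖⁻¹) (inv_ne_zero (hnorm_ne n)))
    have : (fun n => Units.mk0 (‖e n‖⁻¹) (inv_ne_zero (hnorm_ne n))) • e = en := by
      funext n
      rw [Pi.smul_apply', Units.smul_def]
      rfl
    rwa [this] at h
  have henmem : ∀ m q, m < q → en m ∈ Submodule.span ℝ (e '' Set.Ico m q) := by
    intro m q hq
    exact Submodule.smul_mem _ _ (Submodule.subset_span ⟨m, ⟨le_refl m, hq⟩, rfl⟩)
  set σ : ℕ → ℕ := fun n => if n < a then n else l₀ + 1 + n with hσdef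
  have hσmono : StrictMono σ := by
    intro m n hmn
    simp only [hσdef]
    by_cases hm : m < a <;> by_cases hn : n < a <;> simp [hm, hn] <;> omega
  set u : ℕ → X := fun n => en (σ n) with hudef
  set z : ℕ → X := fun n => en (l₀ + 1 + n) with hzdef
  have hublock : IsBlockSeq e u := by
    refine ⟨σ, hσmono, fun n => ⟨hennorm _, ?_⟩⟩
    exact henmem _ _ (hσmono (Nat.lt_succ_self n))
  have hzblock : IsBlockSeq e z := by
    refine ⟨fun n => l₀ + 1 + n, fun m n h => by dsimp only; omega, fun n => ⟨hennorm _, ?_⟩⟩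
    exact henmem _ _ (by dsimp only; omega)
  have hdiff : ∃ S : Finset ℕ, S.card ≤ a ∧ ∀ n ∉ S, u n = z n := by
    refine ⟨Finset.range a, by simp, fun n hn => ?_⟩
    have hna : ¬ n < a := by simpa using hn
    simp only [hudef, hzdef, hσdef, if_neg hna]
  have hbnds := hciso u z hublock hzblock hdiff
  have h1 : ∀ (n : ℕ) (b : ℕ → ℝ),
      ‖∑ k ∈ Finset.range n, b k • z k‖ ≤ c * ‖∑ k ∈ Finset.range n, b k • u k‖ := by
    intro n b
    have h := (hbnds n b).1
    rw [inv_mul_le_iff₀ hc0] at h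
    exact h
  have h2 : ∀ (n : ℕ) (b : ℕ → ℝ),
      ‖∑ k ∈ Finset.range n, b k • u k‖ ≤ c * ‖∑ k ∈ Finset.range n, b k • z k‖ :=
    fun n b => (hbnds n b).2
  have huli : LinearIndependent ℝ u := henli.comp σ hσmono.injective
  have huspan : Submodule.span ℝ (Set.range u) =
      Submodule.span ℝ (e '' {n | n ∉ Set.Icc a (l₀ + a)}) := by
    apply le_antisymm
    · rw [Submodule.span_le]
      rintro _ ⟨n, rfl⟩
      have hmem : σ n ∈ {m | m ∉ Set.Icc a (l₀ + a)} := by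
        simp only [hσdef, Set.mem_setOf_eq, Set.mem_Icc]
        by_cases hn : n < a <;> simp [hn] <;> omega
      exact Submodule.smul_mem _ _ (Submodule.subset_span ⟨σ n, hmem, rfl⟩)
    · rw [Submodule.span_le]
      rintro _ ⟨m, hm, rfl⟩
      simp only [Set.mem_setOf_eq, Set.mem_Icc, not_and, not_le] at hm
      have : ∃ k, σ k = m := by
        by_cases hma : m < a
        · exact ⟨m, by simp [hσdef, hma]⟩
        · refine ⟨m - (l₀ + 1), ?_⟩
          have hm2 : l₀ + a < m := hm (le_of_not_gt hma)
          simp only [hσdef]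
          rw [if_neg (by omega)]
          omega
      obtain ⟨k, hk⟩ := this
      have huk : u k = ‖e m‖⁻¹ • e m := by
        simp only [hudef, hendef, hk]
      have : e m = ‖e m‖ • u k := by
        rw [huk, smul_smul, mul_inv_cancel₀ (hnorm_ne m), one_smul]
      rw [this]
      exact Submodule.smul_mem _ _ (Submodule.subset_span ⟨k, rfl⟩)
  have hzmem : ∀ n, z n ∈ Submodule.span ℝ (e '' {m | l₀ ≤ m}) := by
    intro n
    exact Submodule.smul_mem _ _ (Submodule.subset_span ⟨l₀ + 1 + n, by
      simp only [Set.mem_setOf_eq]; omega, rfl⟩)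
  obtain ⟨S, hS⟩ := transfer u z huli c hc1 h1 h2 _ _ huspan hzmem
  have hsub : Submodule.span ℝ (y '' Set.Icc a l₀) ≤
      Submodule.span ℝ (y '' Set.Icc a (l₀ + a)) :=
    Submodule.span_mono (Set.image_mono (Set.Icc_subset_Icc_right (by omega)))
  refine ⟨c • (S.comp (T.comp (inclCLM hsub))), fun w => ?_⟩
  have hw1 := hT (inclCLM hsub w)
  have hw2 := hS (T (inclCLM hsub w))
  have happ : (c • (S.comp (T.comp (inclCLM hsub)))) w = c • (S (T (inclCLM hsub w))) := rfl
  have hnormw : ‖inclCLM hsub w‖ = ‖w‖ := rfl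
  have hns : ‖(c • (S.comp (T.comp (inclCLM hsub)))) w‖ = c * ‖S (T (inclCLM hsub w))‖ := by
    rw [happ, norm_smul, Real.norm_of_nonneg hc0.le]
  constructor
  · calc ‖w‖ = ‖inclCLM hsub w‖ := hnormw.symm
      _ ≤ ‖T (inclCLM hsub w)‖ := hw1.1
      _ = c * (c⁻¹ * ‖T (inclCLM hsub w)‖) := by
          rw [← mul_assoc, mul_inv_cancel₀ (ne_of_gt hc0), one_mul]
      _ ≤ c * ‖S (T (inclCLM hsub w))‖ := by
          exact mul_le_mul_of_nonneg_left hw2.1 hc0.le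
      _ = ‖(c • (S.comp (T.comp (inclCLM hsub)))) w‖ := hns.symm
  · calc ‖(c • (S.comp (T.comp (inclCLM hsub)))) w‖ = c * ‖S (T (inclCLM hsub w))‖ := hns
      _ ≤ c * (c * ‖T (inclCLM hsub w)‖) := mul_le_mul_of_nonneg_left hw2.2 hc0.le
      _ ≤ c * (c * ((K : ℝ) * ‖inclCLM hsub w‖)) := by
          refine mul_le_mul_of_nonneg_left (mul_le_mul_of_nonneg_left hw1.2 hc0.le) hc0.le
      _ = c ^ 2 * K * ‖w‖ := by rw [hnormw]; ring
      _ ≤ (K'' : ℝ) * ‖w‖ := mul_le_mul_of_nonneg_right hK'' (norm_nonneg w)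


end Auxiliary

/-- given a basis `(eₙ)` with the `c(L)`-perturbation property, if for every
block sequence, every `K` and every `m` there is `l > m` with `span{yₙ : m ≤ n ≤ l}` not
`K`-embeddable into the closed span of the tail `{eₙ : n ≥ l}`, then every block sequence
`(yₙ)` admits successive intervals `(Iⱼ) = ([l j, r j])` with `span{yₙ : n ∈ I_K}` not
`K`-embeddable into the closed span of `{eₙ : n ∉ I_K}` for every `K`, and hence for every
infinite `A ⊆ ℕ` the closed span of `(yₙ)` does not embed into the closed span of
`{eₙ : n ∉ ⋃_{j∈A} Iⱼ}`. -/
theorem tight_intervals_from_tail_estimates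
    {X : Type*} [NormedAddCommGroup X] [NormedSpace ℝ X] [CompleteSpace X]
    (e : ℕ → X) (he : IsBasicSeq e)
    (hdense : DenseRange fun a : ℕ →₀ ℝ => ∑ n ∈ a.support, a n • e n)
    (hc : ∀ L : ℕ, ∃ c : ℝ, 1 ≤ c ∧ ∀ y z : ℕ → X, IsBlockSeq e y → IsBlockSeq e z →
      (∃ S : Finset ℕ, S.card ≤ L ∧ ∀ n ∉ S, y n = z n) →
      ∀ (n : ℕ) (a : ℕ → ℝ),
        c⁻¹ * ‖∑ k ∈ Finset.range n, a k • z k‖ ≤ ‖∑ k ∈ Finset.range n, a k • y k‖ ∧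
        ‖∑ k ∈ Finset.range n, a k • y k‖ ≤ c * ‖∑ k ∈ Finset.range n, a k • z k‖)
    (htight : ∀ y : ℕ → X, IsBlockSeq e y → ∀ K : ℕ, ∀ m : ℕ, ∃ l : ℕ, m < l ∧
      ¬ Embeds (K : ℝ) ↥(Submodule.span ℝ (y '' Set.Icc m l))
          ↥((Submodule.span ℝ (e '' {n | l ≤ n})).topologicalClosure)) :
    ∀ y : ℕ → X, IsBlockSeq e y →
      ∃ l r : ℕ → ℕ, (∀ j, l j ≤ r j) ∧ (∀ j, r j < l (j + 1)) ∧
        (∀ K : ℕ, ¬ Embeds (K : ℝ) ↥(Submodule.span ℝ (y '' (Set.Icc (l K) (r K))))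
          ↥((Submodule.span ℝ (e '' {n | n ∉ Set.Icc (l K) (r K)})).topologicalClosure)) ∧
        ∀ A : Set ℕ, A.Infinite →
          ¬ ∃ K : ℝ, 0 < K ∧
            Embeds K ↥((Submodule.span ℝ (Set.range y)).topologicalClosure)
              ↥((Submodule.span ℝ
                  (e '' {n | ∀ j ∈ A, n ∉ Set.Icc (l j) (r j)})).topologicalClosure) := by
  have hne : ∀ n, e n ≠ 0 := he.1
  have hli : LinearIndependent ℝ e := he.linearIndependent
  choose c hc1 hc2 using hc
  intro y hy
  choose Lf hLf1 hLf2 using htight y hy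
  set step : ℕ → ℕ → ℕ := fun K a => Lf (⌈(c a) ^ 2 * K⌉₊) a with hstepdef
  have hstep_gt : ∀ K a, a < step K a := fun K a => hLf1 _ _
  set lr : ℕ → ℕ × ℕ := fun K => Nat.rec (0, step 0 0 + 0)
    (fun K ih => (ih.2 + 1, step (K + 1) (ih.2 + 1) + (ih.2 + 1))) K with hlrdef
  set l : ℕ → ℕ := fun K => (lr K).1 with hldef
  set r : ℕ → ℕ := fun K => (lr K).2 with hrdef
  have hr : ∀ K, r K = step K (l K) + l K := by
    intro K
    cases K with
    | zero => rfl
    | succ n => rfl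
  have hls : ∀ K, l (K + 1) = r K + 1 := fun K => rfl
  have hlr : ∀ K, l K ≤ r K := fun K => by
    have := hstep_gt K (l K); rw [hr K]; omega
  have h3 : ∀ K : ℕ, ¬ Embeds (K : ℝ) ↥(Submodule.span ℝ (y '' (Set.Icc (l K) (r K))))
      ↥((Submodule.span ℝ (e '' {n | n ∉ Set.Icc (l K) (r K)})).topologicalClosure) := by
    intro K
    rw [hr K]
    exact key_step e hne hli y (l K) (step K (l K)) (hstep_gt K (l K))
      (c (l K)) (hc1 _) (hc2 (l K))
      K (⌈(c (l K)) ^ 2 * K⌉₊) (Nat.le_ceil _) (hLf2 _ _)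
  refine ⟨l, r, hlr, fun K => by rw [hls K]; omega, h3, ?_⟩
  rintro A hA ⟨K₀, hK₀, T, hT⟩
  obtain ⟨j, hjA, hjn⟩ := hA.exists_notMem_finite (Set.finite_Iic ⌈K₀⌉₊)
  have hj : K₀ ≤ (j : ℝ) := by
    have h1 : (⌈K₀⌉₊ : ℕ) < j := by simpa using hjn
    calc K₀ ≤ (⌈K₀⌉₊ : ℝ) := Nat.le_ceil _
      _ ≤ (j : ℝ) := by exact_mod_cast h1.le
  have hd : Submodule.span ℝ (y '' Set.Icc (l j) (r j)) ≤
      (Submodule.span ℝ (Set.range y)).topologicalClosure :=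
    le_trans (Submodule.span_mono (Set.image_subset_range _ _))
      (Submodule.le_topologicalClosure _)
  have hcod : (Submodule.span ℝ
        (e '' {n | ∀ i ∈ A, n ∉ Set.Icc (l i) (r i)})).topologicalClosure ≤
      (Submodule.span ℝ (e '' {n | n ∉ Set.Icc (l j) (r j)})).topologicalClosure :=
    Submodule.topologicalClosure_mono
      (Submodule.span_mono (Set.image_mono (fun n hn => hn j hjA)))
  apply h3 j
  refine ⟨(inclCLM hcod).comp (T.comp (inclCLM hd)), fun w => ?_⟩
  have h := hT (inclCLM hd w)
  have e1 : ‖((inclCLM hcod).comp (T.comp (inclCLM hd))) w‖ = ‖T (inclCLM hd w)‖ := rfl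
  have e2 : ‖inclCLM hd w‖ = ‖w‖ := rfl
  constructor
  · rw [e1]; rw [e2] at h; exact h.1
  · rw [e1]
    calc ‖T (inclCLM hd w)‖ ≤ K₀ * ‖inclCLM hd w‖ := h.2
      _ = K₀ * ‖w‖ := by rw [e2]
      _ ≤ (j : ℝ) * ‖w‖ := mul_le_mul_of_nonneg_right hj (norm_nonneg _)
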